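/- arXiv:1104.0291 — 3 statements merged into one kernel-verified Lean document; each statement's English description precedes it below -/
import Mathlib

section
/- Let N be an ordered Π-net and m, m' vectors with m' = m + W(t) for some transition t ∈ T_i with input place p₁ and output place p₂ in P_i. Then the marking witness transform satisfies m̃'(p₁) = m̃(p₁) − 1, m̃'(p₂) = m̃(p₂) + 1, and m̃'(p) = m̃(p) for all other places p. -/
open Finset

/-- A transition `t` is enabled at marking `m`. -/
def enabledAt {P T : Type*} (Wm : P → T → ℕ) (m : P → ℕ) (t : T) : Prop :=
  ∀ p, Wm p t ≤ m p

/-- Firing transition `t` at marking `m`. -/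
def fireAt {P T : Type*} (Wm Wp : P → T → ℕ) (m : P → ℕ) (t : T) : P → ℕ :=
  fun p => m p - Wm p t + Wp p t

/-- One step of the reachability graph. -/
def step {P T : Type*} (Wm Wp : P → T → ℕ) (m m' : P → ℕ) : Prop :=
  ∃ t, enabledAt Wm m t ∧ m' = fireAt Wm Wp m t

/-- Reachability relation. -/
def reach {P T : Type*} (Wm Wp : P → T → ℕ) : (P → ℕ) → (P → ℕ) → Prop :=
  Relation.ReflTransGen (step Wm Wp)

/-- Input bag of a transition. -/
def preBag {P T : Type*} (Wm : P → T → ℕ) (t : T) : P → ℕ := fun p => Wm p t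

/-- Output bag of a transition. -/
def postBag {P T : Type*} (Wp : P → T → ℕ) (t : T) : P → ℕ := fun p => Wp p t

/-- The finite set of complexes of the net. -/
def complexes {P T : Type*} [Fintype P] [Fintype T] [DecidableEq P]
    (Wm Wp : P → T → ℕ) : Finset (P → ℕ) :=
  (Finset.univ.image (preBag Wm)) ∪ (Finset.univ.image (postBag Wp))

/-- `c` is a complex of the net. -/
def isComplex {P T : Type*} (Wm Wp : P → T → ℕ) (c : P → ℕ) : Prop :=
  (∃ t, c = preBag Wm t) ∨ (∃ t, c = postBag Wp t)

/-- Arc of the reaction graph. -/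
def rarc {P T : Type*} (Wm Wp : P → T → ℕ) (c c' : P → ℕ) : Prop :=
  ∃ t, c = preBag Wm t ∧ c' = postBag Wp t

/-- Weak reversibility: every connected component of the reaction graph is
strongly connected. -/
def weaklyReversible {P T : Type*} (Wm Wp : P → T → ℕ) : Prop :=
  ∀ c c', isComplex Wm Wp c → isComplex Wm Wp c' →
    Relation.ReflTransGen (fun a b => rarc Wm Wp a b ∨ rarc Wm Wp b a) c c' →
    Relation.ReflTransGen (rarc Wm Wp) c c'

/-- An `n`-level ordered Π-net.  Levels are indexed by `Fin n`, index `i`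
standing for level `i+1` of the informal definition.  Every level is a
strongly connected state machine through which the transitions of that level
route exactly one token; transitions of level `i+1` may in addition consume
and produce tokens of level `i`; every level (except the lowest) is connected
to the one below it; two transitions of a level sharing their input (resp.
output) place at that level have equal input (resp. output) bags; and the net
is weakly reversible. -/
structure OrderedPiNet (n : ℕ) (P T : Type*) [Fintype P] [Fintype T]
    [DecidableEq P] [DecidableEq T] where
  Wm : P → T → ℕ
  Wp : P → T → ℕ
  lvlP : P → Fin n
  lvlT : T → Fin n
  lvl_surj : Function.Surjective lvlP
  inPlace : T → P
  outPlace : T → P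
  inPlace_lvl : ∀ t, lvlP (inPlace t) = lvlT t
  outPlace_lvl : ∀ t, lvlP (outPlace t) = lvlT t
  Wm_in : ∀ t, Wm (inPlace t) t = 1
  Wp_out : ∀ t, Wp (outPlace t) t = 1
  Wm_own : ∀ t p, lvlP p = lvlT t → p ≠ inPlace t → Wm p t = 0
  Wp_own : ∀ t p, lvlP p = lvlT t → p ≠ outPlace t → Wp p t = 0
  Wm_below : ∀ t p, Wm p t ≠ 0 → lvlP p = lvlT t ∨ (lvlP p : ℕ) + 1 = (lvlT t : ℕ)
  Wp_below : ∀ t p, Wp p t ≠ 0 → lvlP p = lvlT t ∨ (lvlP p : ℕ) + 1 = (lvlT t : ℕ)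
  connected_below : ∀ i : Fin n, (i : ℕ) ≠ 0 →
    ∃ t p, lvlT t = i ∧ (lvlP p : ℕ) + 1 = (i : ℕ) ∧ Wm p t ≠ 0
  sameIn : ∀ t t', inPlace t = inPlace t' → ∀ p, Wm p t = Wm p t'
  sameOut : ∀ t t', outPlace t = outPlace t' → ∀ p, Wp p t = Wp p t'
  strong : ∀ p q, lvlP p = lvlP q →
    Relation.ReflTransGen (fun a b => ∃ t, inPlace t = a ∧ outPlace t = b) p q
  wr : weaklyReversible Wm Wp

namespace OrderedPiNet

variable {n : ℕ} {P T : Type*} [Fintype P] [Fintype T] [DecidableEq P] [DecidableEq T]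

/-- The potential `pot(p, q)`: the number of tokens `t•(q)` put in `q` by a
common input transition `t` of `p` and `q`, when `q` is one level below `p`,
and `0` otherwise. -/
noncomputable def pot (N : OrderedPiNet n P T) (p q : P) : ℕ :=
  if h : ((N.lvlP q : ℕ) + 1 = (N.lvlP p : ℕ)) ∧ ∃ t, N.outPlace t = p ∧ N.Wp q t ≠ 0
  then N.Wp q h.2.choose else 0

/-- The potential of a place: `pot(p) = ∑_{q} pot(p, q)`. -/
noncomputable def potT (N : OrderedPiNet n P T) (p : P) : ℕ := ∑ q, N.pot p q

/-- The marking witness transform `m ↦ m̃`: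
`m̃(p) = m(p) − ∑_{r one level above p} m̃(r) · pot(r, p)`. -/
noncomputable def mw (N : OrderedPiNet n P T) (m : P → ℤ) (p : P) : ℤ :=
  m p - ∑ r : P, (if h : (N.lvlP p : ℕ) + 1 = (N.lvlP r : ℕ)
    then N.mw m r * (N.pot r p : ℤ) else 0)
termination_by n - (N.lvlP p : ℕ)
decreasing_by
  have h1 : (N.lvlP r : ℕ) < n := (N.lvlP r).isLt
  omega

/-- The row `v_i` of S-invariants applied to a vector: `v_i · x = ∑_{p ∈ P_i} x̃(p)`. -/
noncomputable def vRow (N : OrderedPiNet n P T) (i : Fin n) (x : P → ℤ) : ℤ :=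
  ∑ p ∈ Finset.univ.filter (fun p => N.lvlP p = i), N.mw x p

/-- Number of tokens of `m` in `P_i`. -/
def lvlCount (N : OrderedPiNet n P T) (i : Fin n) (m : P → ℕ) : ℕ :=
  ∑ p ∈ Finset.univ.filter (fun p => N.lvlP p = i), m p

/-- Number of tokens of `m` in `P_{i−1}` (the level just below `i`). -/
def belowCount (N : OrderedPiNet n P T) (i : Fin n) (m : P → ℕ) : ℕ :=
  ∑ p ∈ Finset.univ.filter (fun p => (N.lvlP p : ℕ) + 1 = (i : ℕ)), m p

/-- The level-`i` minimal marked potential `φ_i(m)`. -/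
noncomputable def phi (N : OrderedPiNet n P T) (i : Fin n) (m : P → ℕ) : ℕ :=
  if N.lvlCount i m = 0
  then (Finset.univ.filter (fun p => N.lvlP p = i)).sup N.potT
  else sInf (N.potT '' {p | N.lvlP p = i ∧ m p ≠ 0})

/-- The Π³ condition: every interface place has maximal potential on its level. -/
def isPi3 (N : OrderedPiNet n P T) : Prop :=
  ∀ p t, (N.lvlP p : ℕ) + 1 = (N.lvlT t : ℕ) → N.Wp p t ≠ 0 →
    ∀ q, N.lvlP q = N.lvlP p → N.potT q ≤ N.potT p

/-- One step using only transitions of level index at most `i`. -/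
def stepUpTo (N : OrderedPiNet n P T) (i : Fin n) (m m' : P → ℕ) : Prop :=
  ∃ t, N.lvlT t ≤ i ∧ enabledAt N.Wm m t ∧ m' = fireAt N.Wm N.Wp m t

/-- Reachability using only transitions of level index at most `i` (the set `R_i`). -/
def reachUpTo (N : OrderedPiNet n P T) (i : Fin n) : (P → ℕ) → (P → ℕ) → Prop :=
  Relation.ReflTransGen (N.stepUpTo i)

/-- `i`-liveness. -/
def iLive (N : OrderedPiNet n P T) (i : Fin n) (m : P → ℕ) : Prop :=
  ∀ t, N.lvlT t ≤ i → ∃ m', N.reachUpTo i m m' ∧ enabledAt N.Wm m' t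

/-- The `i`-condition: `m(P_i) > 0` and `m(P_{j−1}) ≥ φ_j(m)` for all levels
`j` with `2 ≤ j ≤ i` (in 1-based numbering). -/
def iCond (N : OrderedPiNet n P T) (i : Fin n) (m : P → ℕ) : Prop :=
  N.lvlCount i m ≠ 0 ∧
  ∀ j : Fin n, 1 ≤ (j : ℕ) → j ≤ i → N.phi j m ≤ N.belowCount j m

end OrderedPiNet

namespace OrderedPiNet

variable {n : ℕ} {P T : Type*} [Fintype P] [Fintype T] [DecidableEq P] [DecidableEq T]

lemma pot_out' (N : OrderedPiNet n P T) (s : T) (p : P)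
    (h : (N.lvlP p : ℕ) + 1 = (N.lvlT s : ℕ)) :
    N.pot (N.outPlace s) p = N.Wp p s := by
  rw [pot]
  by_cases hc : ((N.lvlP p : ℕ) + 1 = (N.lvlP (N.outPlace s) : ℕ)) ∧
      ∃ u, N.outPlace u = N.outPlace s ∧ N.Wp p u ≠ 0
  · rw [dif_pos hc]
    obtain ⟨h1, _⟩ := hc.2.choose_spec
    rw [N.sameOut _ s h1]
  · rw [dif_neg hc]
    have : N.Wp p s = 0 := by
      by_contra h0
      exact hc ⟨by rw [N.outPlace_lvl]; exact h, s, rfl, h0⟩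
    omega

lemma exists_rev (N : OrderedPiNet n P T) (t : T) :
    ∃ s, N.outPlace s = N.inPlace t ∧ ∀ q, N.Wp q s = N.Wm q t := by
  have hs : ∃ s, postBag N.Wp s = preBag N.Wm t := by
    have hc : isComplex N.Wm N.Wp (preBag N.Wm t) := Or.inl ⟨t, rfl⟩
    have hc' : isComplex N.Wm N.Wp (postBag N.Wp t) := Or.inr ⟨t, rfl⟩
    have hpath := N.wr _ _ hc' hc
      (Relation.ReflTransGen.single (Or.inr ⟨t, rfl, rfl⟩))
    rcases hpath.cases_tail with heq | ⟨c, _, hr⟩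
    · exact ⟨t, heq.symm⟩
    · obtain ⟨s, _, hend⟩ := hr
      exact ⟨s, hend.symm⟩
  obtain ⟨s, hs⟩ := hs
  have hW : ∀ q, N.Wp q s = N.Wm q t := fun q => congrFun hs q
  refine ⟨s, ?_, hW⟩
  have h1 : N.Wp (N.inPlace t) s = 1 := by rw [hW, N.Wm_in]
  rcases N.Wp_below s (N.inPlace t) (by rw [h1]; exact one_ne_zero) with hl | hl
  · by_contra hne
    have := N.Wp_own s (N.inPlace t) hl (Ne.symm hne)
    rw [h1] at this; exact one_ne_zero this
  · exfalso
    have h2 : N.Wm (N.outPlace s) t = 1 := by rw [← hW, N.Wp_out]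
    have e1 := congrArg Fin.val (N.inPlace_lvl t)
    have e2 := congrArg Fin.val (N.outPlace_lvl s)
    rcases N.Wm_below t (N.outPlace s) (by rw [h2]; exact one_ne_zero) with hl2 | hl2
    · have e3 := congrArg Fin.val hl2
      omega
    · omega

lemma mw_fire (N : OrderedPiNet n P T) (t : T)
    (hio : N.inPlace t ≠ N.outPlace t) (m m' : P → ℤ)
    (hm' : ∀ p, m' p = m p + ((N.Wp p t : ℤ) - (N.Wm p t : ℤ))) :
    ∀ k (p : P), n - (N.lvlP p : ℕ) ≤ k →
      N.mw m' p - N.mw m p =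
        (if p = N.inPlace t then (-1 : ℤ) else 0) +
        (if p = N.outPlace t then (1 : ℤ) else 0) := by
  intro k
  induction k with
  | zero => intro p hp; have := (N.lvlP p).isLt; omega
  | succ k ih =>
    intro p hp
    have ein := congrArg Fin.val (N.inPlace_lvl t)
    have eout := congrArg Fin.val (N.outPlace_lvl t)
    rw [mw, mw]
    have hsum :
        (∑ r : P, (if h : (N.lvlP p : ℕ) + 1 = (N.lvlP r : ℕ)
            then N.mw m' r * (N.pot r p : ℤ) else 0))
        - (∑ r : P, (if h : (N.lvlP p : ℕ) + 1 = (N.lvlP r : ℕ)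
            then N.mw m r * (N.pot r p : ℤ) else 0))
        = (if (N.lvlP p : ℕ) + 1 = (N.lvlP (N.inPlace t) : ℕ)
            then -(N.pot (N.inPlace t) p : ℤ) else 0)
          + (if (N.lvlP p : ℕ) + 1 = (N.lvlP (N.outPlace t) : ℕ)
            then (N.pot (N.outPlace t) p : ℤ) else 0) := by
      rw [← Finset.sum_sub_distrib]
      have hterm : ∀ r : P,
          (if h : (N.lvlP p : ℕ) + 1 = (N.lvlP r : ℕ)
            then N.mw m' r * (N.pot r p : ℤ) else 0)
          - (if h : (N.lvlP p : ℕ) + 1 = (N.lvlP r : ℕ)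
            then N.mw m r * (N.pot r p : ℤ) else 0)
          = (if r = N.inPlace t then
              (if (N.lvlP p : ℕ) + 1 = (N.lvlP r : ℕ)
                then -(N.pot r p : ℤ) else 0) else 0)
            + (if r = N.outPlace t then
              (if (N.lvlP p : ℕ) + 1 = (N.lvlP r : ℕ)
                then (N.pot r p : ℤ) else 0) else 0) := by
        intro r
        by_cases hc : (N.lvlP p : ℕ) + 1 = (N.lvlP r : ℕ)
        · have hΔ := ih r (by have := (N.lvlP r).isLt; omega)
          rw [dif_pos hc, dif_pos hc, if_pos hc, if_pos hc, ← sub_mul, hΔ]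
          have hne : ¬(N.inPlace t = N.outPlace t) := hio
          by_cases h1 : r = N.inPlace t <;> by_cases h2 : r = N.outPlace t <;>
            simp_all <;> ring
        · simp [hc]
      rw [Finset.sum_congr rfl (fun r _ => hterm r), Finset.sum_add_distrib,
        Finset.sum_ite_eq', Finset.sum_ite_eq']
      simp
    rw [sub_sub_sub_comm, hsum, hm' p]
    by_cases h1 : p = N.inPlace t
    · subst h1
      have h2 : ¬(N.inPlace t = N.outPlace t) := hio
      have hWp : N.Wp (N.inPlace t) t = 0 :=
        N.Wp_own t _ (N.inPlace_lvl t) hio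
      have hWm := N.Wm_in t
      simp only [if_pos rfl, if_neg h2]
      have c1 : ¬((N.lvlP (N.inPlace t) : ℕ) + 1 = (N.lvlP (N.inPlace t) : ℕ)) := by omega
      have c2 : ¬((N.lvlP (N.inPlace t) : ℕ) + 1 = (N.lvlP (N.outPlace t) : ℕ)) := by omega
      rw [if_neg c1, if_neg c2, hWp, hWm]
      norm_num
    · by_cases h2 : p = N.outPlace t
      · subst h2
        have h1' : ¬(N.outPlace t = N.inPlace t) := fun h => hio h.symm
        have hWm : N.Wm (N.outPlace t) t = 0 :=
          N.Wm_own t _ (N.outPlace_lvl t) (fun h => hio h.symm)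
        have hWp := N.Wp_out t
        simp only [if_pos rfl, if_neg h1']
        have c1 : ¬((N.lvlP (N.outPlace t) : ℕ) + 1 = (N.lvlP (N.inPlace t) : ℕ)) := by omega
        have c2 : ¬((N.lvlP (N.outPlace t) : ℕ) + 1 = (N.lvlP (N.outPlace t) : ℕ)) := by omega
        rw [if_neg c1, if_neg c2, hWm, hWp]
        norm_num
      · rw [if_neg h1, if_neg h2]
        by_cases hB : (N.lvlP p : ℕ) + 1 = (N.lvlT t : ℕ)
        · have c1 : (N.lvlP p : ℕ) + 1 = (N.lvlP (N.inPlace t) : ℕ) := by omega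
          have c2 : (N.lvlP p : ℕ) + 1 = (N.lvlP (N.outPlace t) : ℕ) := by omega
          rw [if_pos c1, if_pos c2]
          obtain ⟨s, hso, hsW⟩ := N.exists_rev t
          have hlvls : (N.lvlT s : ℕ) = (N.lvlT t : ℕ) := by
            have := congrArg Fin.val (N.outPlace_lvl s)
            rw [hso] at this; omega
          have hpin : N.pot (N.inPlace t) p = N.Wm p t := by
            rw [← hso, N.pot_out' s p (by omega), hsW]
          have hpout : N.pot (N.outPlace t) p = N.Wp p t := N.pot_out' t p hB
          rw [hpin, hpout]
          ring
        · have hA : ¬((N.lvlP p : ℕ) = (N.lvlT t : ℕ)) ∨ (N.lvlP p : ℕ) = (N.lvlT t : ℕ) :=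
            (em _).symm.imp id id
          have hWm : N.Wm p t = 0 := by
            by_cases hA' : N.lvlP p = N.lvlT t
            · exact N.Wm_own t p hA' h1
            · by_contra h0
              rcases N.Wm_below t p h0 with h | h
              · exact hA' h
              · exact hB h
          have hWp : N.Wp p t = 0 := by
            by_cases hA' : N.lvlP p = N.lvlT t
            · exact N.Wp_own t p hA' h2
            · by_contra h0
              rcases N.Wp_below t p h0 with h | h
              · exact hA' h
              · exact hB h
          have c1 : ¬((N.lvlP p : ℕ) + 1 = (N.lvlP (N.inPlace t) : ℕ)) := by omega
          have c2 : ¬((N.lvlP p : ℕ) + 1 = (N.lvlP (N.outPlace t) : ℕ)) := by omega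
          rw [if_neg c1, if_neg c2, hWm, hWp]
          ring

end OrderedPiNet

/-- Behaviour of the marking witness transform under firing: if
`m' = m + W(t)` for a transition `t` with distinct input place `p₁` and output
place `p₂` at its own level, then `m̃'` equals `m̃` except that it decreases by
one at `p₁` and increases by one at `p₂`. -/
theorem stmt12 {n : ℕ} {P T : Type*} [Fintype P] [Fintype T] [DecidableEq P]
    [DecidableEq T] (N : OrderedPiNet n P T) (t : T)
    (hio : N.inPlace t ≠ N.outPlace t) (m m' : P → ℤ)
    (hm' : ∀ p, m' p = m p + ((N.Wp p t : ℤ) - (N.Wm p t : ℤ))) :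
    N.mw m' (N.inPlace t) = N.mw m (N.inPlace t) - 1 ∧
    N.mw m' (N.outPlace t) = N.mw m (N.outPlace t) + 1 ∧
    ∀ p, p ≠ N.inPlace t → p ≠ N.outPlace t → N.mw m' p = N.mw m p := by
  have key := OrderedPiNet.mw_fire N t hio m m' hm' n
  have hin := key (N.inPlace t) (by omega)
  have hout := key (N.outPlace t) (by omega)
  rw [if_pos rfl, if_neg hio] at hin
  rw [if_pos rfl, if_neg (fun h => hio h.symm)] at hout
  refine ⟨by linarith, by linarith, fun p h1 h2 => ?_⟩
  have hp := key p (by omega)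
  rw [if_neg h1, if_neg h2] at hp
  linarith
end

section
/- For an ordered Π-net with initial marking m0, the quantities m̃(P_i) = ∑_{p ∈ P_i} m̃(p) are invariants of reachability: for every reachable marking m ∈ R(m0) and every level i, m̃(P_i) = m̃0(P_i). Equivalently, the vectors v_i = ∑_{p ∈ P_i} B(p), where B is the matrix of the linear map m ↦ m̃, are S-semi-flows of the net (v_i · W = 0). -/
open Finset

namespace OrderedPiNet

variable {n : ℕ} {P T : Type*} [Fintype P] [Fintype T] [DecidableEq P] [DecidableEq T]

lemma mw_add' (N : OrderedPiNet n P T) (x y : P → ℤ) (p : P) :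
    N.mw (fun q => x q + y q) p = N.mw x p + N.mw y p := by
  rw [mw, mw, mw]
  have key : ∀ r ∈ (Finset.univ : Finset P),
      (if h : (N.lvlP p : ℕ) + 1 = (N.lvlP r : ℕ)
        then N.mw (fun q => x q + y q) r * (N.pot r p : ℤ) else 0)
      = (if h : (N.lvlP p : ℕ) + 1 = (N.lvlP r : ℕ)
          then N.mw x r * (N.pot r p : ℤ) else 0)
        + (if h : (N.lvlP p : ℕ) + 1 = (N.lvlP r : ℕ)
          then N.mw y r * (N.pot r p : ℤ) else 0) := by
    intro r _
    by_cases h : (N.lvlP p : ℕ) + 1 = (N.lvlP r : ℕ)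
    · rw [dif_pos h, dif_pos h, dif_pos h, mw_add' N x y r, add_mul]
    · simp [h]
  rw [Finset.sum_congr rfl key, Finset.sum_add_distrib]
  ring
termination_by n - (N.lvlP p : ℕ)
decreasing_by
  have h1 : (N.lvlP r : ℕ) < n := (N.lvlP r).isLt
  omega

lemma exists_pred' (N : OrderedPiNet n P T) (t : T) :
    ∃ t'', N.outPlace t'' = N.inPlace t ∧ ∀ q, N.Wp q t'' = N.Wm q t := by
  -- first get t2 with postBag t2 = preBag t
  have h1 : Relation.ReflTransGen (rarc N.Wm N.Wp) (postBag N.Wp t) (preBag N.Wm t) := by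
    apply N.wr
    · exact Or.inr ⟨t, rfl⟩
    · exact Or.inl ⟨t, rfl⟩
    · exact Relation.ReflTransGen.single (Or.inr ⟨t, rfl, rfl⟩)
  obtain ⟨t2, hbag⟩ : ∃ t2, ∀ q, N.Wm q t = N.Wp q t2 := by
    rcases (Relation.ReflTransGen.cases_tail h1) with heq | ⟨c, _, harc⟩
    · exact ⟨t, fun q => by
        have := congrFun heq q
        simpa [preBag, postBag] using this⟩
    · obtain ⟨t2, _, h2⟩ := harc
      exact ⟨t2, fun q => by
        have := congrFun h2 q
        simpa [preBag, postBag] using this⟩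
  have hin : N.Wp (N.inPlace t) t2 = 1 := by rw [← hbag]; exact N.Wm_in t
  have hcase := N.Wp_below t2 (N.inPlace t) (by rw [hin]; exact one_ne_zero)
  rcases hcase with hc | hc
  · -- same level: inPlace t = outPlace t2
    have : N.inPlace t = N.outPlace t2 := by
      by_contra hne
      have := N.Wp_own t2 (N.inPlace t) hc hne
      rw [hin] at this; exact one_ne_zero this
    exact ⟨t2, this.symm, fun q => (hbag q).symm⟩
  · -- impossible case
    exfalso
    have h3 : N.Wm (N.outPlace t2) t ≠ 0 := by
      rw [hbag]; rw [N.Wp_out t2]; exact one_ne_zero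
    have h4 := N.Wm_below t (N.outPlace t2) h3
    have h5 : (N.lvlP (N.outPlace t2) : ℕ) = (N.lvlT t2 : ℕ) := by
      rw [N.outPlace_lvl]
    have h6 : (N.lvlP (N.inPlace t) : ℕ) = (N.lvlT t : ℕ) := by
      rw [N.inPlace_lvl]
    rcases h4 with h4 | h4
    · have : (N.lvlP (N.outPlace t2) : ℕ) = (N.lvlT t : ℕ) := by rw [h4]
      omega
    · omega

lemma pot_out_eq (N : OrderedPiNet n P T) (t : T) (p : P)
    (hl : (N.lvlP p : ℕ) + 1 = (N.lvlT t : ℕ)) :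
    N.pot (N.outPlace t) p = N.Wp p t := by
  unfold pot
  by_cases h : ((N.lvlP p : ℕ) + 1 = (N.lvlP (N.outPlace t) : ℕ)) ∧
      ∃ t', N.outPlace t' = N.outPlace t ∧ N.Wp p t' ≠ 0
  · rw [dif_pos h]
    exact N.sameOut _ t h.2.choose_spec.1 p
  · rw [dif_neg h]
    by_contra hne
    refine h ⟨by rw [N.outPlace_lvl]; exact hl, t, rfl, fun c => hne ?_⟩
    rw [c]

lemma mw_diff' (N : OrderedPiNet n P T) (t : T) (p : P) :
    N.mw (fun q => (N.Wp q t : ℤ) - (N.Wm q t : ℤ)) p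
      = (if p = N.outPlace t then 1 else 0) - (if p = N.inPlace t then 1 else 0) := by
  obtain ⟨t'', hout, hbag⟩ := N.exists_pred' t
  have hlt'' : (N.lvlT t'' : ℕ) = (N.lvlT t : ℕ) := by
    have := N.outPlace_lvl t''
    have h2 := N.inPlace_lvl t
    rw [hout] at this
    rw [← this, h2]
  rw [mw]
  by_cases hA : (N.lvlP p : ℕ) = (N.lvlT t : ℕ)
  · -- level of t : sum vanishes, d p = e p
    have hsum : ∀ r ∈ (Finset.univ : Finset P),
        (if h : (N.lvlP p : ℕ) + 1 = (N.lvlP r : ℕ)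
          then N.mw (fun q => (N.Wp q t : ℤ) - (N.Wm q t : ℤ)) r * (N.pot r p : ℤ) else 0) = 0 := by
      intro r _
      by_cases h : (N.lvlP p : ℕ) + 1 = (N.lvlP r : ℕ)
      · rw [dif_pos h, mw_diff' N t r]
        have hro : r ≠ N.outPlace t := by
          intro he; rw [he, N.outPlace_lvl] at h; omega
        have hri : r ≠ N.inPlace t := by
          intro he; rw [he, N.inPlace_lvl] at h; omega
        rw [if_neg hro, if_neg hri]; ring
      · rw [dif_neg h]
    rw [Finset.sum_congr rfl hsum, Finset.sum_const_zero]
    have hWp : N.Wp p t = if p = N.outPlace t then 1 else 0 := by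
      by_cases he : p = N.outPlace t
      · rw [if_pos he, he, N.Wp_out]
      · rw [if_neg he]
        exact N.Wp_own t p (Fin.ext (by rw [← N.inPlace_lvl t, N.inPlace_lvl]; exact Fin.val_injective hA ▸ hA)) he
    have hWm : N.Wm p t = if p = N.inPlace t then 1 else 0 := by
      by_cases he : p = N.inPlace t
      · rw [if_pos he, he, N.Wm_in]
      · rw [if_neg he]
        exact N.Wm_own t p (Fin.ext hA) he
    rw [hWp, hWm]
    split <;> split <;> simp
  · by_cases hB : (N.lvlP p : ℕ) + 1 = (N.lvlT t : ℕ)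
    · -- level just below
      have hsum : ∀ r ∈ (Finset.univ : Finset P),
          (if h : (N.lvlP p : ℕ) + 1 = (N.lvlP r : ℕ)
            then N.mw (fun q => (N.Wp q t : ℤ) - (N.Wm q t : ℤ)) r * (N.pot r p : ℤ) else 0)
          = (if r = N.outPlace t then (N.pot r p : ℤ) else 0)
            - (if r = N.inPlace t then (N.pot r p : ℤ) else 0) := by
        intro r _
        by_cases h : (N.lvlP p : ℕ) + 1 = (N.lvlP r : ℕ)
        · rw [dif_pos h, mw_diff' N t r, sub_mul]
          congr 1 <;> split <;> simp
        · rw [dif_neg h]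
          have hro : r ≠ N.outPlace t := by
            intro he; rw [he, N.outPlace_lvl] at h; omega
          have hri : r ≠ N.inPlace t := by
            intro he; rw [he, N.inPlace_lvl] at h; omega
          rw [if_neg hro, if_neg hri]; ring
      rw [Finset.sum_congr rfl hsum, Finset.sum_sub_distrib,
        Finset.sum_ite_eq' Finset.univ (N.outPlace t),
        Finset.sum_ite_eq' Finset.univ (N.inPlace t)]
      simp only [Finset.mem_univ, if_pos]
      have hpo : N.pot (N.outPlace t) p = N.Wp p t := N.pot_out_eq t p hB
      have hpi : N.pot (N.inPlace t) p = N.Wm p t := by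
        have hlB : (N.lvlP p : ℕ) + 1 = (N.lvlT t'' : ℕ) := by omega
        rw [← hout, N.pot_out_eq t'' p hlB, hbag]
      have hpo2 : p ≠ N.outPlace t := by
        intro he; rw [he, N.outPlace_lvl] at hA; exact hA rfl
      have hpi2 : p ≠ N.inPlace t := by
        intro he; rw [he, N.inPlace_lvl] at hA; exact hA rfl
      rw [hpo, hpi, if_neg hpo2, if_neg hpi2]
      ring
    · -- far below or unrelated
      have hWp : N.Wp p t = 0 := by
        by_contra hne
        rcases N.Wp_below t p hne with h | h
        · exact hA (by rw [h])
        · exact hB h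
      have hWm : N.Wm p t = 0 := by
        by_contra hne
        rcases N.Wm_below t p hne with h | h
        · exact hA (by rw [h])
        · exact hB h
      have hsum : ∀ r ∈ (Finset.univ : Finset P),
          (if h : (N.lvlP p : ℕ) + 1 = (N.lvlP r : ℕ)
            then N.mw (fun q => (N.Wp q t : ℤ) - (N.Wm q t : ℤ)) r * (N.pot r p : ℤ) else 0) = 0 := by
        intro r _
        by_cases h : (N.lvlP p : ℕ) + 1 = (N.lvlP r : ℕ)
        · rw [dif_pos h, mw_diff' N t r]
          have hro : r ≠ N.outPlace t := by
            intro he; rw [he, N.outPlace_lvl] at h; exact hB h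
          have hri : r ≠ N.inPlace t := by
            intro he; rw [he, N.inPlace_lvl] at h; exact hB h
          rw [if_neg hro, if_neg hri]; ring
        · rw [dif_neg h]
      rw [Finset.sum_congr rfl hsum, Finset.sum_const_zero]
      have hpo2 : p ≠ N.outPlace t := by
        intro he; rw [he, N.outPlace_lvl] at hA; exact hA rfl
      have hpi2 : p ≠ N.inPlace t := by
        intro he; rw [he, N.inPlace_lvl] at hA; exact hA rfl
      rw [hWp, hWm, if_neg hpo2, if_neg hpi2]
      ring
termination_by n - (N.lvlP p : ℕ)
decreasing_by
  all_goals
    have h1 : (N.lvlP r : ℕ) < n := (N.lvlP r).isLt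
    omega

end OrderedPiNet

section MainAux

variable {n : ℕ} {P T : Type*} [Fintype P] [Fintype T] [DecidableEq P] [DecidableEq T]

lemma vRow_add' (N : OrderedPiNet n P T) (i : Fin n) (x y : P → ℤ) :
    N.vRow i (fun q => x q + y q) = N.vRow i x + N.vRow i y := by
  unfold OrderedPiNet.vRow
  rw [← Finset.sum_add_distrib]
  exact Finset.sum_congr rfl fun p _ => N.mw_add' x y p

lemma vRow_diff' (N : OrderedPiNet n P T) (i : Fin n) (t : T) :
    N.vRow i (fun p => (N.Wp p t : ℤ) - (N.Wm p t : ℤ)) = 0 := by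
  unfold OrderedPiNet.vRow
  rw [Finset.sum_congr rfl (fun p _ => N.mw_diff' t p), Finset.sum_sub_distrib,
    Finset.sum_ite_eq' _ (N.outPlace t) (fun _ => (1 : ℤ)),
    Finset.sum_ite_eq' _ (N.inPlace t) (fun _ => (1 : ℤ))]
  simp [Finset.mem_filter, N.outPlace_lvl, N.inPlace_lvl]

end MainAux

/-- The level sums of the marking witness are reachability invariants, and the
corresponding vectors `v_i = ∑_{p ∈ P_i} B(p)` are S-semi-flows (`v_i · W = 0`). -/
theorem stmt13 {n : ℕ} {P T : Type*} [Fintype P] [Fintype T] [DecidableEq P]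
    [DecidableEq T] (N : OrderedPiNet n P T) (m0 : P → ℕ) :
    (∀ m, reach N.Wm N.Wp m0 m → ∀ i : Fin n,
      N.vRow i (fun p => (m p : ℤ)) = N.vRow i (fun p => (m0 p : ℤ))) ∧
    (∀ (i : Fin n) (t : T),
      N.vRow i (fun p => (N.Wp p t : ℤ) - (N.Wm p t : ℤ)) = 0) := by
  constructor
  · intro m hm i
    induction hm with
    | refl => rfl
    | tail hab hbc ih =>
      rename_i m1 m2
      obtain ⟨t, hen, hfire⟩ := hbc
      have hcast : (fun p => (m2 p : ℤ))
          = fun p => (m1 p : ℤ) + ((N.Wp p t : ℤ) - (N.Wm p t : ℤ)) := by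
        funext p
        rw [hfire]
        unfold fireAt
        have := hen p
        push_cast [Nat.cast_sub this]
        ring
      rw [hcast, vRow_add' N i, vRow_diff' N i t, add_zero, ih]
  · exact fun i t => vRow_diff' N i t
end

section
/- In a Π³-net, the condition 'φ_i(m) ≤ m(P_{i−1})' is preserved by firing: if m →t m' and φ_i(m) ≤ m(P_{i−1}), then φ_i(m') ≤ m'(P_{i−1}); hence it is preserved along all reachable markings. -/
open Finset

section Aux

variable {n : ℕ} {P T : Type*} [Fintype P] [Fintype T] [DecidableEq P] [DecidableEq T]

lemma aux_lvlCount_ne (N : OrderedPiNet n P T) {i : Fin n} {m : P → ℕ}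
    (h : N.lvlCount i m ≠ 0) : ∃ p, N.lvlP p = i ∧ m p ≠ 0 := by
  by_contra hc
  push_neg at hc
  exact h (Finset.sum_eq_zero fun p hp => hc p (by simpa using hp))

lemma aux_lvlCount_pos (N : OrderedPiNet n P T) {i : Fin n} {m : P → ℕ} {p : P}
    (hp : N.lvlP p = i) (hm : m p ≠ 0) : N.lvlCount i m ≠ 0 := by
  intro h
  exact hm (Finset.sum_eq_zero_iff.1 h p (Finset.mem_filter.2 ⟨Finset.mem_univ _, hp⟩))

lemma aux_phi_congr (N : OrderedPiNet n P T) (i : Fin n) {m m' : P → ℕ}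
    (h : ∀ p, N.lvlP p = i → m p = m' p) : N.phi i m = N.phi i m' := by
  have hc : N.lvlCount i m = N.lvlCount i m' := by
    refine Finset.sum_congr rfl fun p hp => h p (by simpa using hp)
  have hs : {p | N.lvlP p = i ∧ m p ≠ 0} = {p | N.lvlP p = i ∧ m' p ≠ 0} := by
    ext p
    simp only [Set.mem_setOf_eq]
    constructor
    · rintro ⟨h1, h2⟩; exact ⟨h1, (h p h1) ▸ h2⟩
    · rintro ⟨h1, h2⟩; exact ⟨h1, (h p h1).symm ▸ h2⟩
  unfold OrderedPiNet.phi
  rw [hc, hs]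

lemma aux_fire_sum (N : OrderedPiNet n P T) {m : P → ℕ} {t : T}
    (h : enabledAt N.Wm m t) (s : Finset P) :
    (∑ p ∈ s, fireAt N.Wm N.Wp m t p) + ∑ p ∈ s, N.Wm p t
      = (∑ p ∈ s, m p) + ∑ p ∈ s, N.Wp p t := by
  rw [← Finset.sum_add_distrib, ← Finset.sum_add_distrib]
  refine Finset.sum_congr rfl fun p _ => ?_
  have := h p
  simp only [fireAt]
  omega

lemma aux_potT_out (N : OrderedPiNet n P T) (t : T) :
    N.potT (N.outPlace t) =
      ∑ r ∈ Finset.univ.filter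
        (fun r => (N.lvlP r : ℕ) + 1 = (N.lvlP (N.outPlace t) : ℕ)), N.Wp r t := by
  unfold OrderedPiNet.potT
  rw [Finset.sum_filter]
  refine Finset.sum_congr rfl fun r _ => ?_
  by_cases h1 : ((N.lvlP r : ℕ) + 1 = (N.lvlP (N.outPlace t) : ℕ)) ∧
      ∃ t', N.outPlace t' = N.outPlace t ∧ N.Wp r t' ≠ 0
  · rw [OrderedPiNet.pot, dif_pos h1, if_pos h1.1]
    exact N.sameOut _ t h1.2.choose_spec.1 r
  · rw [OrderedPiNet.pot, dif_neg h1]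
    by_cases h2 : (N.lvlP r : ℕ) + 1 = (N.lvlP (N.outPlace t) : ℕ)
    · rw [if_pos h2]
      by_contra hne
      exact h1 ⟨h2, t, rfl, fun hz => hne (hz ▸ rfl)⟩
    · rw [if_neg h2]

lemma aux_ownWm (N : OrderedPiNet n P T) (t : T) :
    ∑ p ∈ Finset.univ.filter (fun p => N.lvlP p = N.lvlT t), N.Wm p t = 1 := by
  rw [Finset.sum_eq_single (N.inPlace t)]
  · exact N.Wm_in t
  · intro b hb hne
    exact N.Wm_own t b (by simpa using hb) hne
  · intro h
    exact absurd (N.inPlace_lvl t) (by simpa using h)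

lemma aux_ownWp (N : OrderedPiNet n P T) (t : T) :
    ∑ p ∈ Finset.univ.filter (fun p => N.lvlP p = N.lvlT t), N.Wp p t = 1 := by
  rw [Finset.sum_eq_single (N.outPlace t)]
  · exact N.Wp_out t
  · intro b hb hne
    exact N.Wp_own t b (by simpa using hb) hne
  · intro h
    exact absurd (N.outPlace_lvl t) (by simpa using h)

lemma aux_touched_max (N : OrderedPiNet n P T) (h3 : N.isPi3) {i : Fin n} {t : T}
    (ht : (N.lvlT t : ℕ) = (i : ℕ) + 1) {p : P} (hp : N.lvlP p = i)
    (h : N.Wm p t ≠ 0 ∨ N.Wp p t ≠ 0) :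
    ∀ q, N.lvlP q = i → N.potT q ≤ N.potT p := by
  have key : ∃ t', (N.lvlP p : ℕ) + 1 = (N.lvlT t' : ℕ) ∧ N.Wp p t' ≠ 0 := by
    rcases h with h | h
    · have hc : isComplex N.Wm N.Wp (preBag N.Wm t) := Or.inl ⟨t, rfl⟩
      have hc' : isComplex N.Wm N.Wp (postBag N.Wp t) := Or.inr ⟨t, rfl⟩
      have hpath := N.wr _ _ hc' hc
        (Relation.ReflTransGen.single (Or.inr ⟨t, rfl, rfl⟩))
      rcases Relation.ReflTransGen.cases_tail hpath with heq | ⟨c, _, harc⟩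
      · refine ⟨t, by rw [hp]; omega, ?_⟩
        have hev : N.Wm p t = N.Wp p t := congrFun heq p
        rw [← hev]
        exact h
      · obtain ⟨t'', hc1, hc2⟩ := harc
        have hWp : ∀ q, N.Wp q t'' = N.Wm q t := fun q => (congrFun hc2 q).symm
        have hin : N.Wp (N.inPlace t) t'' ≠ 0 := by
          rw [hWp, N.Wm_in t]; exact one_ne_zero
        have hWpp : N.Wp p t'' ≠ 0 := by rw [hWp]; exact h
        refine ⟨t'', ?_, hWpp⟩
        rcases N.Wp_below t'' (N.inPlace t) hin with h1 | h1
        · have h1v := congrArg Fin.val h1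
          rw [N.inPlace_lvl] at h1v
          rw [hp]
          omega
        · exfalso
          rw [N.inPlace_lvl] at h1
          rcases N.Wp_below t'' p hWpp with h2 | h2
          · have h2v := congrArg Fin.val h2
            rw [hp] at h2v
            omega
          · rw [hp] at h2
            omega
    · exact ⟨t, by rw [hp]; omega, h⟩
  obtain ⟨t', ht', hw⟩ := key
  intro q hq
  exact h3 p t' ht' hw q (by rw [hq, hp])

lemma aux_phi_fire_le (N : OrderedPiNet n P T) (h3 : N.isPi3) {i : Fin n} {t : T}
    (ht : (N.lvlT t : ℕ) = (i : ℕ) + 1) {m : P → ℕ} (he : enabledAt N.Wm m t) :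
    N.phi i (fireAt N.Wm N.Wp m t) ≤ N.phi i m := by
  set m' := fireAt N.Wm N.Wp m t with hm'
  have hmax : ∀ p, N.lvlP p = i → m' p ≠ m p →
      ∀ q, N.lvlP q = i → N.potT q ≤ N.potT p := by
    intro p hp hne q hq
    refine aux_touched_max N h3 ht hp ?_ q hq
    by_contra hcon
    push_neg at hcon
    apply hne
    simp [hm', fireAt, hcon.1, hcon.2]
  by_cases h0' : N.lvlCount i m' = 0
  · by_cases h0 : N.lvlCount i m = 0
    · unfold OrderedPiNet.phi
      rw [if_pos h0', if_pos h0]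
    · obtain ⟨p, hp, hmp⟩ := aux_lvlCount_ne N h0
      unfold OrderedPiNet.phi
      rw [if_pos h0', if_neg h0]
      refine le_csInf ⟨_, ⟨p, ⟨hp, hmp⟩, rfl⟩⟩ ?_
      rintro b ⟨r, ⟨hr1, hr2⟩, rfl⟩
      have hz : m' r = 0 := Finset.sum_eq_zero_iff.1 h0' r
        (Finset.mem_filter.2 ⟨Finset.mem_univ _, hr1⟩)
      exact Finset.sup_le fun q hq => hmax r hr1 (by omega) q (by simpa using hq)
  · obtain ⟨p₀, hp₀, hmp₀⟩ := aux_lvlCount_ne N h0'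
    by_cases h0 : N.lvlCount i m = 0
    · unfold OrderedPiNet.phi
      rw [if_neg h0', if_pos h0]
      refine le_trans (Nat.sInf_le ⟨p₀, ⟨hp₀, hmp₀⟩, rfl⟩) ?_
      exact Finset.le_sup (Finset.mem_filter.2 ⟨Finset.mem_univ _, hp₀⟩)
    · unfold OrderedPiNet.phi
      rw [if_neg h0', if_neg h0]
      have hne : (N.potT '' {p | N.lvlP p = i ∧ m p ≠ 0}).Nonempty := by
        obtain ⟨p, hp, hmp⟩ := aux_lvlCount_ne N h0
        exact ⟨_, ⟨p, ⟨hp, hmp⟩, rfl⟩⟩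
      obtain ⟨p, ⟨hp, hmp⟩, hpot⟩ := Nat.sInf_mem hne
      rw [← hpot]
      by_cases htp : m' p = m p
      · exact Nat.sInf_le ⟨p, ⟨hp, by omega⟩, rfl⟩
      · exact le_trans (Nat.sInf_le ⟨p₀, ⟨hp₀, hmp₀⟩, rfl⟩) (hmax p hp htp p₀ hp₀)

lemma aux_key (N : OrderedPiNet n P T) (h3 : N.isPi3) (i : Fin n) (m : P → ℕ)
    (hphi : N.phi i m ≤ N.belowCount i m) (t : T) (he : enabledAt N.Wm m t) :
    N.phi i (fireAt N.Wm N.Wp m t) ≤ N.belowCount i (fireAt N.Wm N.Wp m t) := by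
  set m' := fireAt N.Wm N.Wp m t with hm'
  by_cases hA : (N.lvlT t : ℕ) = (i : ℕ)
  · -- transition at level i
    have hq : N.lvlP (N.outPlace t) = i := by
      have := N.outPlace_lvl t
      exact Fin.ext (by rw [this]; exact hA)
    have hq0 : m' (N.outPlace t) ≠ 0 := by
      have := N.Wp_out t
      simp only [hm', fireAt]
      omega
    have h0' : N.lvlCount i m' ≠ 0 := aux_lvlCount_pos N hq hq0
    have hphi' : N.phi i m' ≤ N.potT (N.outPlace t) := by
      unfold OrderedPiNet.phi
      rw [if_neg h0']
      exact Nat.sInf_le ⟨_, ⟨hq, hq0⟩, rfl⟩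
    have hpot : N.potT (N.outPlace t) =
        ∑ r ∈ Finset.univ.filter (fun r => (N.lvlP r : ℕ) + 1 = (i : ℕ)), N.Wp r t := by
      rw [aux_potT_out N t, hq]
    have hsum := aux_fire_sum N he
      (Finset.univ.filter (fun r => (N.lvlP r : ℕ) + 1 = (i : ℕ)))
    have hle : (∑ r ∈ Finset.univ.filter (fun r => (N.lvlP r : ℕ) + 1 = (i : ℕ)), N.Wm r t)
        ≤ N.belowCount i m :=
      Finset.sum_le_sum fun r _ => he r
    rw [← hm'] at hsum
    unfold OrderedPiNet.belowCount at *
    omega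
  · by_cases hB : (N.lvlT t : ℕ) = (i : ℕ) + 1
    · -- transition one level above
      have hbc : N.belowCount i m' = N.belowCount i m := by
        refine Finset.sum_congr rfl fun p hp => ?_
        have hpv : (N.lvlP p : ℕ) + 1 = (i : ℕ) := by simpa using hp
        have hwm : N.Wm p t = 0 := by
          by_contra hc
          rcases N.Wm_below t p hc with h1 | h1
          · have := congrArg Fin.val h1; omega
          · omega
        have hwp : N.Wp p t = 0 := by
          by_contra hc
          rcases N.Wp_below t p hc with h1 | h1
          · have := congrArg Fin.val h1; omega
          · omega
        simp [hm', fireAt, hwm, hwp]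
      rw [hbc]
      exact le_trans (aux_phi_fire_le N h3 hB he) hphi
    · by_cases hC : (N.lvlT t : ℕ) + 1 = (i : ℕ)
      · -- transition one level below
        have hphieq : N.phi i m = N.phi i m' := by
          refine aux_phi_congr N i fun p hp => ?_
          have hpv : (N.lvlP p : ℕ) = (i : ℕ) := by rw [hp]
          have hwm : N.Wm p t = 0 := by
            by_contra hc
            rcases N.Wm_below t p hc with h1 | h1
            · have := congrArg Fin.val h1; omega
            · omega
          have hwp : N.Wp p t = 0 := by
            by_contra hc
            rcases N.Wp_below t p hc with h1 | h1
            · have := congrArg Fin.val h1; omega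
            · omega
          simp [hm', fireAt, hwm, hwp]
        have hfeq : Finset.univ.filter (fun p => (N.lvlP p : ℕ) + 1 = (i : ℕ))
            = Finset.univ.filter (fun p => N.lvlP p = N.lvlT t) := by
          refine Finset.filter_congr fun p _ => ?_
          constructor
          · intro h; exact Fin.ext (by omega)
          · intro h; have := congrArg Fin.val h; omega
        have hbc : N.belowCount i m' = N.belowCount i m := by
          have hsum := aux_fire_sum N he
            (Finset.univ.filter (fun p => (N.lvlP p : ℕ) + 1 = (i : ℕ)))
          rw [← hm'] at hsum
          have h1 : (∑ p ∈ Finset.univ.filter (fun p => (N.lvlP p : ℕ) + 1 = (i : ℕ)),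
              N.Wm p t) = 1 := by rw [hfeq]; exact aux_ownWm N t
          have h2 : (∑ p ∈ Finset.univ.filter (fun p => (N.lvlP p : ℕ) + 1 = (i : ℕ)),
              N.Wp p t) = 1 := by rw [hfeq]; exact aux_ownWp N t
          unfold OrderedPiNet.belowCount
          omega
        rw [hbc, ← hphieq]
        exact hphi
      · -- transition at an unrelated level
        have huntouched : ∀ p, ((N.lvlP p : ℕ) = (i : ℕ) ∨ (N.lvlP p : ℕ) + 1 = (i : ℕ))
            → m' p = m p := by
          intro p hp
          have hwm : N.Wm p t = 0 := by
            by_contra hc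
            rcases N.Wm_below t p hc with h1 | h1
            · have := congrArg Fin.val h1; omega
            · omega
          have hwp : N.Wp p t = 0 := by
            by_contra hc
            rcases N.Wp_below t p hc with h1 | h1
            · have := congrArg Fin.val h1; omega
            · omega
          simp [hm', fireAt, hwm, hwp]
        have hphieq : N.phi i m = N.phi i m' :=
          aux_phi_congr N i fun p hp => (huntouched p (Or.inl (by rw [hp]))).symm
        have hbc : N.belowCount i m' = N.belowCount i m := by
          refine Finset.sum_congr rfl fun p hp => ?_
          exact huntouched p (Or.inr (by simpa using hp))
        rw [hbc, ← hphieq]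
        exact hphi

end Aux

/-- In a Π³-net the condition `φ_i(m) ≤ m(P_{i−1})` is preserved by firing any
transition, hence along all reachable markings. -/
theorem stmt16 {n : ℕ} {P T : Type*} [Fintype P] [Fintype T] [DecidableEq P]
    [DecidableEq T] (N : OrderedPiNet n P T) (h3 : N.isPi3)
    (i : Fin n) (hi : 1 ≤ (i : ℕ)) (m : P → ℕ)
    (hphi : N.phi i m ≤ N.belowCount i m) :
    (∀ (t : T) (m' : P → ℕ), enabledAt N.Wm m t → m' = fireAt N.Wm N.Wp m t →
      N.phi i m' ≤ N.belowCount i m') ∧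
    (∀ m', reach N.Wm N.Wp m m' → N.phi i m' ≤ N.belowCount i m') := by
  have key' : ∀ m : P → ℕ, N.phi i m ≤ N.belowCount i m → ∀ (t : T) (m' : P → ℕ),
      enabledAt N.Wm m t → m' = fireAt N.Wm N.Wp m t →
      N.phi i m' ≤ N.belowCount i m' := by
    intro m hm t m' he heq
    subst heq
    exact aux_key N h3 i m hm t he
  refine ⟨key' m hphi, ?_⟩
  intro m' hr
  induction hr with
  | refl => exact hphi
  | tail h1 h2 ih =>
    obtain ⟨t, he, heq⟩ := h2
    exact key' _ ih t _ he heq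
end
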